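/- arXiv:2002.06521 — 2 statements merged into one kernel-verified Lean document; each statement's English description precedes it below -/
import Mathlib

section
/- Consider the dyadic setup. Fix s ∈ {1,2,3} and α_s ∈ ℝ. Suppose that for every value w = (a, c, z) of W, the law of U given {W = w, S = s} is the exponential tilt by α_s of the law of U given {W = w, S = 0}, that the moment generating function of law(U | W = w, S = 0) is finite in an open interval containing α_s, and that the law of the centered variable Δ₀ := U − E[U | W = w, S = 0] under μ(· | W = w, S = 0) depends on w only through its C-component c. Then the difference β^s(w) := E[U | W = w, S = s] − E[U | W = w, S = 0] depends on w only through c; explicitly it equals K'_c(α_s), where K_c is the cumulant generating function of the (c-dependent) centered law of Δ₀. -/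
open MeasureTheory ProbabilityTheory

/-- The exponential tilt of a measure `ν` on `ℝ` by `α`: the probability measure absolutely
continuous with respect to `ν` with density `x ↦ exp (α x) / ∫ exp (α y) dν(y)`. -/
noncomputable def expTilt (ν : Measure ℝ) (α : ℝ) : Measure ℝ :=
  ν.withDensity fun x => ENNReal.ofReal (Real.exp (α * x) / ∫ y, Real.exp (α * y) ∂ν)

/-- The conditional mean `E[U | B] = (1/μ(B)) ∫_B U dμ`. -/
noncomputable def condMean {Ω : Type*} [MeasurableSpace Ω] (μ : Measure Ω)
    (U : Ω → ℝ) (B : Set Ω) : ℝ :=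
  (μ B).toReal⁻¹ * ∫ ω in B, U ω ∂μ

/-- The event `{W = (a, c, z), S = s}` in the dyadic setup. -/
def dyadEvent {Ω 𝒜 𝒞 𝒵 : Type*} (A : Ω → 𝒜) (C : Ω → 𝒞) (Z : Ω → 𝒵) (S : Ω → Fin 4)
    (a : 𝒜) (c : 𝒞) (z : 𝒵) (s : Fin 4) : Set Ω :=
  {ω | A ω = a ∧ C ω = c ∧ Z ω = z ∧ S ω = s}

section Aux

open Real MeasureTheory ProbabilityTheory Filter

/-- Differentiation under the integral sign for the moment generating function. -/
private lemma mgf_hasDerivAt {ν : Measure ℝ} {l r α : ℝ} (hl : l < α) (hr : α < r)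
    (hint : ∀ t ∈ Set.Ioo l r, Integrable (fun x => Real.exp (t * x)) ν) :
    Integrable (fun x => x * Real.exp (α * x)) ν ∧
      HasDerivAt (fun t => ∫ x, Real.exp (t * x) ∂ν) (∫ x, x * Real.exp (α * x) ∂ν) α := by
  have h1 : 0 < α - l := sub_pos.2 hl
  have h2 : 0 < r - α := sub_pos.2 hr
  set ε := min (α - l) (r - α) / 3 with hε
  have hε0 : 0 < ε := by
    apply div_pos (lt_min h1 h2) (by norm_num)
  have hε1 : ε ≤ (α - l) / 3 := by
    apply div_le_div_of_nonneg_right (min_le_left _ _) (by norm_num)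
  have hε2 : ε ≤ (r - α) / 3 := by
    apply div_le_div_of_nonneg_right (min_le_right _ _) (by norm_num)
  have hmem1 : α - 2 * ε ∈ Set.Ioo l r := ⟨by linarith, by linarith⟩
  have hmem2 : α + 2 * ε ∈ Set.Ioo l r := ⟨by linarith, by linarith⟩
  set bound : ℝ → ℝ :=
    fun x => ε⁻¹ * (Real.exp ((α - 2 * ε) * x) + Real.exp ((α + 2 * ε) * x)) with hbound_def
  have hbound_int : Integrable bound ν :=
    ((hint _ hmem1).add (hint _ hmem2)).const_mul _
  have key : ∀ x : ℝ, ∀ t ∈ Metric.ball α ε, ‖x * Real.exp (t * x)‖ ≤ bound x := by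
    intro x t ht
    rw [Metric.mem_ball, Real.dist_eq] at ht
    have habs := abs_lt.1 ht
    rw [norm_mul, Real.norm_eq_abs, Real.norm_eq_abs, Real.abs_exp]
    have h3 : |x| ≤ ε⁻¹ * Real.exp (ε * |x|) := by
      have hge : ε * |x| ≤ Real.exp (ε * |x|) := by
        have := Real.add_one_le_exp (ε * |x|); linarith
      calc |x| = ε⁻¹ * (ε * |x|) := by field_simp
        _ ≤ ε⁻¹ * Real.exp (ε * |x|) :=
            mul_le_mul_of_nonneg_left hge (inv_nonneg.2 hε0.le)
    have h4 : Real.exp (ε * |x| + t * x)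
        ≤ Real.exp ((α - 2 * ε) * x) + Real.exp ((α + 2 * ε) * x) := by
      rcases le_or_gt 0 x with hx | hx
      · have hle : ε * |x| + t * x ≤ (α + 2 * ε) * x := by
          rw [abs_of_nonneg hx]; nlinarith
        exact (Real.exp_le_exp.2 hle).trans (le_add_of_nonneg_left (Real.exp_nonneg _))
      · have hle : ε * |x| + t * x ≤ (α - 2 * ε) * x := by
          rw [abs_of_neg hx]; nlinarith
        exact (Real.exp_le_exp.2 hle).trans (le_add_of_nonneg_right (Real.exp_nonneg _))
    calc |x| * Real.exp (t * x) ≤ (ε⁻¹ * Real.exp (ε * |x|)) * Real.exp (t * x) := by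
          exact mul_le_mul_of_nonneg_right h3 (Real.exp_nonneg _)
      _ = ε⁻¹ * Real.exp (ε * |x| + t * x) := by rw [Real.exp_add]; ring
      _ ≤ bound x := by
          rw [hbound_def]
          exact mul_le_mul_of_nonneg_left h4 (inv_nonneg.2 hε0.le)
  exact hasDerivAt_integral_of_dominated_loc_of_deriv_le
    (F := fun t x => Real.exp (t * x)) (F' := fun t x => x * Real.exp (t * x))
    (bound := bound) (Metric.ball_mem_nhds α hε0)
    (Eventually.of_forall fun t =>
      (Real.measurable_exp.comp (measurable_id'.const_mul t)).aestronglyMeasurable)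
    (hint α ⟨hl, hr⟩)
    ((measurable_id.mul
      (Real.measurable_exp.comp (measurable_id'.const_mul α))).aestronglyMeasurable)
    (Eventually.of_forall fun x t ht => key x t ht) hbound_int
    (Eventually.of_forall fun x t _ => by
      have h := (hasDerivAt_mul_const (x := t) x).exp
      exact h.congr_deriv (mul_comm _ _))

/-- Mean of the exponential tilt. -/
private lemma integral_expTilt {ν : Measure ℝ} (α : ℝ) :
    ∫ x, x ∂(expTilt ν α)
      = (∫ x, x * Real.exp (α * x) ∂ν) / (∫ x, Real.exp (α * x) ∂ν) := by
  set M := ∫ y, Real.exp (α * y) ∂ν with hM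
  have hMnn : 0 ≤ M := integral_nonneg fun x => (Real.exp_nonneg _)
  have hd : Measurable fun x => Real.toNNReal (Real.exp (α * x) / M) :=
    (measurable_real_toNNReal.comp
      ((Real.measurable_exp.comp (measurable_id'.const_mul α)).div_const M))
  have hrw : (fun x => ENNReal.ofReal (Real.exp (α * x) / M))
      = fun x => ((Real.toNNReal (Real.exp (α * x) / M) : NNReal) : ENNReal) := rfl
  rw [expTilt, hrw, integral_withDensity_eq_integral_smul hd]
  have : (fun x : ℝ => (Real.toNNReal (Real.exp (α * x) / M)) • x)
      = fun x : ℝ => M⁻¹ * (x * Real.exp (α * x)) := by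
    funext x
    rw [NNReal.smul_def, Real.coe_toNNReal _ (div_nonneg (Real.exp_nonneg _) hMnn),
      smul_eq_mul]
    ring
  rw [this, integral_const_mul, inv_mul_eq_div]

private lemma condMean_eq_integral_cond {Ω : Type*} [MeasurableSpace Ω] (μ : Measure Ω)
    (U : Ω → ℝ) (B : Set Ω) : condMean μ U B = ∫ ω, U ω ∂(μ[|B]) := by
  rw [condMean, ProbabilityTheory.cond, integral_smul_measure, ENNReal.toReal_inv, smul_eq_mul]

end Aux

/-- **The selection-bias shift `βˢ(w)` depends on `w = (a, c, z)` only through `c`.**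
In the dyadic setup, fix `s ∈ {1,2,3}` and `αₛ ∈ ℝ`.  Suppose that for every value
`w = (a, c, z)` of `W`, the law of `U` given `{W = w, S = s}` is the exponential tilt by
`αₛ` of the law of `U` given `{W = w, S = 0}`, the moment generating function of
`law(U | W = w, S = 0)` is finite in an open interval containing `αₛ`, and the law of the
centered variable `Δ₀ = U − E[U | W = w, S = 0]` under `μ(· | W = w, S = 0)` depends on `w`
only through `c`.  Then `βˢ(w) = E[U | W = w, S = s] − E[U | W = w, S = 0]` depends on `w`
only through `c`; explicitly, it equals `K_c'(αₛ)` where `K_c` is the cumulant generating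
function of the (`c`-dependent) centered law of `Δ₀`. -/


theorem beta_depends_only_on_c
    {Ω 𝒜 𝒞 𝒵 : Type*} [MeasurableSpace Ω]
    [MeasurableSpace 𝒜] [MeasurableSingletonClass 𝒜] [Countable 𝒜]
    [MeasurableSpace 𝒞] [MeasurableSingletonClass 𝒞] [Countable 𝒞]
    [MeasurableSpace 𝒵] [MeasurableSingletonClass 𝒵] [Countable 𝒵]
    (μ : Measure Ω) [IsProbabilityMeasure μ]
    (A : Ω → 𝒜) (C : Ω → 𝒞) (Z : Ω → 𝒵) (S : Ω → Fin 4)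
    (hA : Measurable A) (hC : Measurable C) (hZ : Measurable Z) (hS : Measurable S)
    (U : Ω → ℝ) (hU : Measurable U) (hUint : Integrable U μ)
    (s : Fin 4) (hs : s ∈ ({1, 2, 3} : Set (Fin 4))) (αs : ℝ)
    (hpos : ∀ (a : 𝒜) (c : 𝒞) (z : 𝒵),
      0 < μ (dyadEvent A C Z S a c z 0) ∧ 0 < μ (dyadEvent A C Z S a c z s))
    (htilt : ∀ (a : 𝒜) (c : 𝒞) (z : 𝒵),
      Measure.map U (μ[|dyadEvent A C Z S a c z s])
        = expTilt (Measure.map U (μ[|dyadEvent A C Z S a c z 0])) αs)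
    (hmgf : ∀ (a : 𝒜) (c : 𝒞) (z : 𝒵), ∃ l r : ℝ, l < αs ∧ αs < r ∧
      ∀ t ∈ Set.Ioo l r, Integrable (fun x => Real.exp (t * x))
        (Measure.map U (μ[|dyadEvent A C Z S a c z 0])))
    (hcent : ∀ (a a' : 𝒜) (c : 𝒞) (z z' : 𝒵),
      Measure.map (fun ω => U ω - condMean μ U (dyadEvent A C Z S a c z 0))
          (μ[|dyadEvent A C Z S a c z 0])
        = Measure.map (fun ω => U ω - condMean μ U (dyadEvent A C Z S a' c z' 0))
          (μ[|dyadEvent A C Z S a' c z' 0])) :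
    ∀ (a a' : 𝒜) (c : 𝒞) (z z' : 𝒵),
      (condMean μ U (dyadEvent A C Z S a c z s) - condMean μ U (dyadEvent A C Z S a c z 0)
        = condMean μ U (dyadEvent A C Z S a' c z' s)
          - condMean μ U (dyadEvent A C Z S a' c z' 0))
      ∧ condMean μ U (dyadEvent A C Z S a c z s) - condMean μ U (dyadEvent A C Z S a c z 0)
        = deriv (fun t => Real.log (∫ x, Real.exp (t * x)
            ∂(Measure.map (fun ω => U ω - condMean μ U (dyadEvent A C Z S a c z 0))
              (μ[|dyadEvent A C Z S a c z 0])))) αs := by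
  have key : ∀ (a : 𝒜) (c : 𝒞) (z : 𝒵),
      condMean μ U (dyadEvent A C Z S a c z s) - condMean μ U (dyadEvent A C Z S a c z 0)
        = deriv (fun t => Real.log (∫ x, Real.exp (t * x)
            ∂(Measure.map (fun ω => U ω - condMean μ U (dyadEvent A C Z S a c z 0))
              (μ[|dyadEvent A C Z S a c z 0])))) αs := by
    intro a c z
    set B0 := dyadEvent A C Z S a c z 0 with hB0def
    set Bs := dyadEvent A C Z S a c z s with hBsdef
    have hB0 : μ B0 ≠ 0 := (hpos a c z).1.ne'
    have hBs : μ Bs ≠ 0 := (hpos a c z).2.ne'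
    haveI : IsProbabilityMeasure (μ[|B0]) := cond_isProbabilityMeasure hB0
    haveI : IsProbabilityMeasure (μ[|Bs]) := cond_isProbabilityMeasure hBs
    set ν := Measure.map U (μ[|B0]) with hν
    haveI : IsProbabilityMeasure ν := Measure.isProbabilityMeasure_map hU.aemeasurable
    obtain ⟨l, r, hl, hr, hint⟩ := hmgf a c z
    obtain ⟨hint', hder⟩ := mgf_hasDerivAt hl hr hint
    set m0 := condMean μ U B0 with hm0def
    set M : ℝ → ℝ := fun t => ∫ x, Real.exp (t * x) ∂ν with hM
    -- positivity of the mgf on (l, r)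
    have hMpos : ∀ t ∈ Set.Ioo l r, 0 < M t := fun t ht => integral_exp_pos (hint t ht)
    -- the conditional mean given S = s is the mean of the tilted measure
    have hms : condMean μ U Bs = (∫ x, x * Real.exp (αs * x) ∂ν) / M αs := by
      have h : ∫ x, x ∂(Measure.map U (μ[|Bs])) = ∫ ω, U ω ∂(μ[|Bs]) :=
        integral_map (f := fun x => x) hU.aemeasurable
          measurable_id.aestronglyMeasurable
      rw [condMean_eq_integral_cond, ← h, htilt a c z, ← hν, integral_expTilt αs]
    -- mgf of the centered law
    have hg : Measurable fun x : ℝ => x - m0 := measurable_id.sub measurable_const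
    have hcomp : Measure.map (fun ω => U ω - m0) (μ[|B0])
        = Measure.map (fun x => x - m0) ν := by
      rw [hν, Measure.map_map hg hU]
      rfl
    have hcent_mgf : ∀ t, (∫ x, Real.exp (t * x) ∂(Measure.map (fun x => x - m0) ν))
        = Real.exp (-(t * m0)) * M t := by
      intro t
      rw [integral_map (f := fun x => Real.exp (t * x)) hg.aemeasurable
        (Real.measurable_exp.comp (measurable_id'.const_mul t)).aestronglyMeasurable]
      have hexp : ∀ x : ℝ, Real.exp (t * (x - m0))
          = Real.exp (-(t * m0)) * Real.exp (t * x) := by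
        intro x; rw [← Real.exp_add]; ring_nf
      simp_rw [hexp]
      rw [integral_const_mul]
    -- the cgf of the centered law agrees near αs with t ↦ -(t m0) + log (M t)
    have heq : (fun t => Real.log (∫ x, Real.exp (t * x)
          ∂(Measure.map (fun ω => U ω - m0) (μ[|B0]))))
        =ᶠ[nhds αs] fun t => -(t * m0) + Real.log (M t) := by
      filter_upwards [Ioo_mem_nhds hl hr] with t ht
      rw [hcomp, hcent_mgf t,
        Real.log_mul (Real.exp_ne_zero _) (hMpos t ht).ne', Real.log_exp]
    have hG : HasDerivAt (fun t => -(t * m0) + Real.log (M t))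
        (-m0 + (∫ x, x * Real.exp (αs * x) ∂ν) / M αs) αs := by
      exact ((hasDerivAt_mul_const (x := αs) m0).neg).add
        (hder.log (hMpos αs ⟨hl, hr⟩).ne')
    rw [heq.deriv_eq, hG.deriv, hms]
    ring
  intro a a' c z z'
  refine ⟨?_, key a c z⟩
  rw [key a c z, key a' c z', hcent a a' c z z']
end

section
/- (Proposition 2, multiplicative identification, discrete-covariate form.) Consider the dyadic setup and let Y : Ω → ℝ be a nonnegative integrable random variable. Assume: (1) multiplicative outcome model: the conditional expectation of Y given the σ-algebra generated by (U, A, C, Z, S) equals exp(U + b(S, A, C) + τ(S, C)) almost everywhere, for measurable functions b and τ, with exp(U) integrable given each event {W = w, S = s}; (2) tilting: for every w = (a, c, z) and every s ∈ {1,2,3} there is α_s ∈ ℝ such that law(U | W = w, S = s) is the exponential tilt by α_s of law(U | W = w, S = 0), with the moment generating function of law(U | W = w, S = 0) finite on an open interval containing all α_s and the point 1 + α_s; (3) mean independence: E[U | W = w] depends on w only through c; (4) for every s, the law of Δ_s := U − E[U | W = w, S = s] under μ(· | W = w, S = s) depends on w only through c. Then for every w = (a, c, z) and every s ∈ {1,2,3},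 E[Y | W = w, S = s] = exp( Σ_{s̃ ≠ s} β^{s s̃}(c) · μ(S = s̃ | W = w) + b(s, a, c) + τ̄(s, c) ), where β^{s s̃}(c) := E[U | W = w, S = s] − E[U | W = w, S = s̃] depends on w only through c, and τ̄(s, c) := τ(s, c) + E[U | W = w] + log E[exp(Δ_s) | W = w, S = s] depends only on (s, c). -/
open MeasureTheory ProbabilityTheory

lemma aux_condMean_eq_cond_integral {Ω : Type*} [MeasurableSpace Ω] (μ : Measure Ω)
    (f : Ω → ℝ) (B : Set Ω) :
    condMean μ f B = ∫ ω, f ω ∂(μ[|B]) := by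
  rw [ProbabilityTheory.cond, integral_smul_measure, smul_eq_mul, ENNReal.toReal_inv]
  rfl

lemma aux_condMean_eq_map_integral {Ω : Type*} [MeasurableSpace Ω] (μ : Measure Ω)
    {U : Ω → ℝ} (hU : Measurable U) (B : Set Ω) :
    condMean μ U B = ∫ x, x ∂(Measure.map U (μ[|B])) := by
  rw [aux_condMean_eq_cond_integral,
    integral_map hU.aemeasurable measurable_id'.aestronglyMeasurable]

lemma aux_expTilt_eq_tilted (ν : Measure ℝ) (α : ℝ) :
    expTilt ν α = ν.tilted (fun x => α * x) := rfl

lemma aux_integral_id_expTilt (ν : Measure ℝ) (α : ℝ) :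
    ∫ x, x ∂(expTilt ν α)
      = (∫ x, x * Real.exp (α * x) ∂ν) / ∫ x, Real.exp (α * x) ∂ν := by
  rw [aux_expTilt_eq_tilted, integral_tilted]
  simp_rw [smul_eq_mul]
  have h : ∀ x : ℝ, (Real.exp (α * x) / ∫ y, Real.exp (α * y) ∂ν) * x
      = (x * Real.exp (α * x)) / ∫ y, Real.exp (α * y) ∂ν := fun x => by ring
  simp_rw [h]
  rw [integral_div]

lemma aux_integrable_mul_exp {ν : Measure ℝ} {l r t : ℝ}
    (hmem : t ∈ Set.Ioo l r)
    (hall : ∀ u ∈ Set.Ioo l r, Integrable (fun x => Real.exp (u * x)) ν) :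
    Integrable (fun x => x * Real.exp (t * x)) ν := by
  obtain ⟨hl, hr⟩ := hmem
  set ε := min (t - l) (r - t) / 2 with hεdef
  have hε0 : 0 < ε := by
    apply div_pos _ two_pos
    exact lt_min (by linarith) (by linarith)
  have h1 : t + ε ∈ Set.Ioo l r := by
    constructor
    · linarith
    · have h0 : min (t - l) (r - t) ≤ r - t := min_le_right _ _
      rw [hεdef]; linarith
  have h2 : t - ε ∈ Set.Ioo l r := by
    constructor
    · have h0 : min (t - l) (r - t) ≤ t - l := min_le_left _ _
      rw [hεdef]; linarith
    · linarith
  have I1 := hall _ h1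
  have I2 := hall _ h2
  refine ((I1.add I2).const_mul ε⁻¹).mono' ?_ ?_
  · exact (measurable_id'.mul ((measurable_const.mul measurable_id').exp)).aestronglyMeasurable
  · refine Filter.Eventually.of_forall fun x => ?_
    have hexp : (0 : ℝ) < Real.exp (t * x) := Real.exp_pos _
    have habs : ε * |x| ≤ Real.exp (ε * x) + Real.exp (-(ε * x)) := by
      have h3 : ε * |x| ≤ Real.exp (ε * |x|) := by
        linarith [Real.add_one_le_exp (ε * |x|)]
      rcases abs_cases x with ⟨hx, _⟩ | ⟨hx, _⟩
      · rw [hx] at h3 ⊢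
        linarith [(Real.exp_pos (-(ε * x))).le]
      · rw [hx] at h3 ⊢
        rw [mul_neg] at h3
        linarith [(Real.exp_pos (ε * x)).le]
    have hbound : |x| * Real.exp (t * x)
        ≤ ε⁻¹ * (Real.exp ((t + ε) * x) + Real.exp ((t - ε) * x)) := by
      have step : ε * (|x| * Real.exp (t * x))
          ≤ Real.exp ((t + ε) * x) + Real.exp ((t - ε) * x) := by
        have := mul_le_mul_of_nonneg_right habs hexp.le
        calc ε * (|x| * Real.exp (t * x)) = (ε * |x|) * Real.exp (t * x) := by ring
        _ ≤ (Real.exp (ε * x) + Real.exp (-(ε * x))) * Real.exp (t * x) := this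
        _ = Real.exp ((t + ε) * x) + Real.exp ((t - ε) * x) := by
            rw [add_mul, ← Real.exp_add, ← Real.exp_add]
            ring_nf
      calc |x| * Real.exp (t * x) = ε⁻¹ * (ε * (|x| * Real.exp (t * x))) := by
            field_simp
      _ ≤ ε⁻¹ * (Real.exp ((t + ε) * x) + Real.exp ((t - ε) * x)) := by
            exact mul_le_mul_of_nonneg_left step (by positivity)
    calc ‖x * Real.exp (t * x)‖ = |x| * Real.exp (t * x) := by
          rw [norm_mul, Real.norm_eq_abs, Real.norm_eq_abs, Real.abs_exp]
    _ ≤ _ := hbound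

lemma aux_integral_id_expTilt_shift {ν : Measure ℝ} [IsProbabilityMeasure ν] (δ t : ℝ)
    (hint1 : Integrable (fun x => Real.exp (t * x)) ν)
    (hint2 : Integrable (fun x => x * Real.exp (t * x)) ν) :
    ∫ x, x ∂(expTilt (Measure.map (fun x => x + δ) ν) t)
      = (∫ x, x ∂(expTilt ν t)) + δ := by
  have hmeas : Measurable (fun x : ℝ => x + δ) := measurable_id'.add_const δ
  have hZ : 0 < ∫ x, Real.exp (t * x) ∂ν := integral_exp_pos hint1
  have hZ' : ∫ x, Real.exp (t * x) ∂(Measure.map (fun x => x + δ) ν)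
      = Real.exp (t * δ) * ∫ x, Real.exp (t * x) ∂ν := by
    rw [integral_map hmeas.aemeasurable
      (show Measurable fun x : ℝ => Real.exp (t * x) by fun_prop).aestronglyMeasurable]
    have h : ∀ x : ℝ, Real.exp (t * (x + δ)) = Real.exp (t * δ) * Real.exp (t * x) := by
      intro x; rw [← Real.exp_add]; ring_nf
    simp_rw [h]
    rw [integral_const_mul]
  have hN' : ∫ x, x * Real.exp (t * x) ∂(Measure.map (fun x => x + δ) ν)
      = Real.exp (t * δ) * ((∫ x, x * Real.exp (t * x) ∂ν)
          + δ * ∫ x, Real.exp (t * x) ∂ν) := by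
    rw [integral_map hmeas.aemeasurable
      (show Measurable fun x : ℝ => x * Real.exp (t * x) by fun_prop).aestronglyMeasurable]
    have h : ∀ x : ℝ, (x + δ) * Real.exp (t * (x + δ))
        = Real.exp (t * δ) * (x * Real.exp (t * x))
          + (Real.exp (t * δ) * δ) * Real.exp (t * x) := by
      intro x
      rw [show t * (x + δ) = t * δ + t * x from by ring, Real.exp_add]
      ring
    simp_rw [h]
    rw [integral_add (hint2.const_mul _) (hint1.const_mul _), integral_const_mul,
      integral_const_mul]
    ring
  rw [aux_integral_id_expTilt, aux_integral_id_expTilt, hZ', hN']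
  field_simp

lemma aux_integrable_cond {Ω : Type*} [MeasurableSpace Ω] {μ : Measure Ω} {f : Ω → ℝ}
    {B : Set Ω} (hB : μ B ≠ 0) (hint : IntegrableOn f B μ) : Integrable f (μ[|B]) := by
  rw [ProbabilityTheory.cond]
  exact hint.smul_measure (ENNReal.inv_ne_top.mpr hB)

lemma aux_condMean_exp_pos {Ω : Type*} [MeasurableSpace Ω] (μ : Measure Ω)
    [IsFiniteMeasure μ] {U : Ω → ℝ} {B : Set Ω} (hB : μ B ≠ 0)
    (hint : IntegrableOn (fun ω => Real.exp (U ω)) B μ) :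
    0 < condMean μ (fun ω => Real.exp (U ω)) B := by
  rw [aux_condMean_eq_cond_integral]
  haveI : IsProbabilityMeasure (μ[|B]) := cond_isProbabilityMeasure hB
  exact integral_exp_pos (aux_integrable_cond hB hint)

/-- The event `{W = (a, c, z)}` in the dyadic setup. -/
def wEvent {Ω 𝒜 𝒞 𝒵 : Type*} (A : Ω → 𝒜) (C : Ω → 𝒞) (Z : Ω → 𝒵)
    (a : 𝒜) (c : 𝒞) (z : 𝒵) : Set Ω :=
  {ω | A ω = a ∧ C ω = c ∧ Z ω = z}

/-- **Proposition 2 (multiplicative identification with a negative control exposure),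
discrete-covariate form.**  In the dyadic setup, with `Y` nonnegative and integrable,
assume:
(1) the multiplicative outcome model
`E[Y | σ(U, A, C, Z, S)] = exp(U + b(S, A, C) + τ(S, C))` a.e., with `exp U` integrable
given each event `{W = w, S = s}`;
(2) for every `w = (a, c, z)` and every nameship type `s ≠ 0` the law of `U` given
`{W = w, S = s}` is the exponential tilt by `αₛ` of its law given `{W = w, S = 0}`, with the
moment generating function of the latter finite on an open interval containing all `αₛ` and
`1 + αₛ`;
(3) `E[U | W = w]` depends on `w` only through `c` (mean independence);
(4) for every `s`, the law of `Δₛ = U − E[U | W = w, S = s]` under `μ(· | W = w, S = s)`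
depends on `w` only through `c`.  Then for every `w = (a, c, z)` and every `s ≠ 0`,
`E[Y | W = w, S = s]
  = exp( ∑_{s̃ ≠ s} β^{s s̃}(c) μ(S = s̃ | W = w) + b(s, a, c) + τ̄(s, c) )`,
where `β^{s s̃}(c) = E[U | W = w, S = s] − E[U | W = w, S = s̃]` depends on `w` only through
`c` and `τ̄(s, c) = τ(s, c) + E[U | W = w] + log E[exp Δₛ | W = w, S = s]` depends only on
`(s, c)`. -/
theorem proposition_two_multiplicative_identification
    {Ω 𝒜 𝒞 𝒵 : Type*} [MeasurableSpace Ω]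
    [MeasurableSpace 𝒜] [MeasurableSingletonClass 𝒜] [Countable 𝒜]
    [MeasurableSpace 𝒞] [MeasurableSingletonClass 𝒞] [Countable 𝒞]
    [MeasurableSpace 𝒵] [MeasurableSingletonClass 𝒵] [Countable 𝒵]
    (μ : Measure Ω) [IsProbabilityMeasure μ]
    (A : Ω → 𝒜) (C : Ω → 𝒞) (Z : Ω → 𝒵) (S : Ω → Fin 4)
    (hA : Measurable A) (hC : Measurable C) (hZ : Measurable Z) (hS : Measurable S)
    (U : Ω → ℝ) (hU : Measurable U) (hUint : Integrable U μ)
    (Y : Ω → ℝ) (hYnn : ∀ ω, 0 ≤ Y ω) (hYint : Integrable Y μ)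
    (b : Fin 4 → 𝒜 → 𝒞 → ℝ) (τ : Fin 4 → 𝒞 → ℝ) (α : Fin 4 → ℝ)
    (hpos : ∀ (a : 𝒜) (c : 𝒞) (z : 𝒵) (s : Fin 4), 0 < μ (dyadEvent A C Z S a c z s))
    -- (1) multiplicative outcome model w.r.t. the σ-algebra generated by (U, A, C, Z, S)
    (houtcome :
      μ[Y | MeasurableSpace.comap (fun ω => (U ω, A ω, C ω, Z ω, S ω)) inferInstance]
        =ᵐ[μ] fun ω => Real.exp (U ω + b (S ω) (A ω) (C ω) + τ (S ω) (C ω)))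
    (hexpint : ∀ (a : 𝒜) (c : 𝒞) (z : 𝒵) (s : Fin 4),
      IntegrableOn (fun ω => Real.exp (U ω)) (dyadEvent A C Z S a c z s) μ)
    -- (2) exponential tilting of the conditional laws of U
    (htilt : ∀ (a : 𝒜) (c : 𝒞) (z : 𝒵) (s : Fin 4), s ≠ 0 →
      Measure.map U (μ[|dyadEvent A C Z S a c z s])
        = expTilt (Measure.map U (μ[|dyadEvent A C Z S a c z 0])) (α s))
    (hmgf : ∀ (a : 𝒜) (c : 𝒞) (z : 𝒵), ∃ l r : ℝ,
      (∀ s : Fin 4, s ≠ 0 → α s ∈ Set.Ioo l r ∧ 1 + α s ∈ Set.Ioo l r) ∧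
      ∀ t ∈ Set.Ioo l r, Integrable (fun x => Real.exp (t * x))
        (Measure.map U (μ[|dyadEvent A C Z S a c z 0])))
    -- (3) mean independence: E[U | W = w] depends on w only through c
    (hmeanindep : ∀ (a a' : 𝒜) (c : 𝒞) (z z' : 𝒵),
      condMean μ U (wEvent A C Z a c z) = condMean μ U (wEvent A C Z a' c z'))
    -- (4) for every s, the centered law of Δₛ given {W = w, S = s} depends on w
    -- only through c
    (hcent : ∀ (s : Fin 4) (a a' : 𝒜) (c : 𝒞) (z z' : 𝒵),
      Measure.map (fun ω => U ω - condMean μ U (dyadEvent A C Z S a c z s))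
          (μ[|dyadEvent A C Z S a c z s])
        = Measure.map (fun ω => U ω - condMean μ U (dyadEvent A C Z S a' c z' s))
          (μ[|dyadEvent A C Z S a' c z' s])) :
    ∀ (a : 𝒜) (c : 𝒞) (z : 𝒵) (s : Fin 4), s ≠ 0 →
      (condMean μ Y (dyadEvent A C Z S a c z s)
        = Real.exp
            ((∑ t ∈ Finset.univ.filter (fun t => t ≠ s),
                (condMean μ U (dyadEvent A C Z S a c z s)
                    - condMean μ U (dyadEvent A C Z S a c z t))
                  * ((μ (dyadEvent A C Z S a c z t)).toReal
                      / (μ (wEvent A C Z a c z)).toReal))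
              + b s a c
              + (τ s c + condMean μ U (wEvent A C Z a c z)
                  + Real.log (condMean μ
                      (fun ω => Real.exp (U ω - condMean μ U (dyadEvent A C Z S a c z s)))
                      (dyadEvent A C Z S a c z s)))))
      ∧ ∀ (t : Fin 4) (a' : 𝒜) (z' : 𝒵),
          condMean μ U (dyadEvent A C Z S a c z s)
              - condMean μ U (dyadEvent A C Z S a c z t)
            = condMean μ U (dyadEvent A C Z S a' c z' s)
              - condMean μ U (dyadEvent A C Z S a' c z' t) := by
  have hW : ∀ (a : 𝒜) (c : 𝒞) (z : 𝒵) (t : Fin 4),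
      MeasurableSet (dyadEvent A C Z S a c z t) := by
    intro a c z t
    have : dyadEvent A C Z S a c z t
        = A ⁻¹' {a} ∩ (C ⁻¹' {c} ∩ (Z ⁻¹' {z} ∩ S ⁻¹' {t})) := by
      ext ω; simp [dyadEvent]
    rw [this]
    exact (hA (measurableSet_singleton a)).inter ((hC (measurableSet_singleton c)).inter
      ((hZ (measurableSet_singleton z)).inter (hS (measurableSet_singleton t))))
  -- Part 2 core: for s' ≠ 0 the gap to the baseline mean depends only on c
  have key : ∀ (a : 𝒜) (z : 𝒵) (s' : Fin 4), s' ≠ 0 → ∀ (a' : 𝒜) (z' : 𝒵), ∀ c : 𝒞,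
      condMean μ U (dyadEvent A C Z S a c z s') - condMean μ U (dyadEvent A C Z S a c z 0)
        = condMean μ U (dyadEvent A C Z S a' c z' s')
            - condMean μ U (dyadEvent A C Z S a' c z' 0) := by
    intro a z s' hs' a' z' c
    set m0 := condMean μ U (dyadEvent A C Z S a c z 0) with hm0
    set m0' := condMean μ U (dyadEvent A C Z S a' c z' 0) with hm0'
    set ν := Measure.map U (μ[|dyadEvent A C Z S a c z 0]) with hν
    set ν' := Measure.map U (μ[|dyadEvent A C Z S a' c z' 0]) with hν'
    haveI hP1 : IsProbabilityMeasure (μ[|dyadEvent A C Z S a c z 0]) :=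
      cond_isProbabilityMeasure (hpos a c z 0).ne'
    haveI hP2 : IsProbabilityMeasure (μ[|dyadEvent A C Z S a' c z' 0]) :=
      cond_isProbabilityMeasure (hpos a' c z' 0).ne'
    haveI : IsProbabilityMeasure ν := Measure.isProbabilityMeasure_map hU.aemeasurable
    haveI : IsProbabilityMeasure ν' := Measure.isProbabilityMeasure_map hU.aemeasurable
    have hmapmap : ∀ (B : Set Ω) (m : ℝ),
        Measure.map (fun ω => U ω - m) (μ[|B])
          = Measure.map (fun x => x - m) (Measure.map U (μ[|B])) := by
      intro B m
      rw [Measure.map_map (measurable_id'.sub_const m) hU]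
      rfl
    have hcent0 := hcent 0 a a' c z z'
    rw [hmapmap, hmapmap, ← hm0, ← hm0', ← hν, ← hν'] at hcent0
    have hshift : ν' = Measure.map (fun x => x + (m0' - m0)) ν := by
      have h1 : Measure.map (fun x : ℝ => x + m0')
            (Measure.map (fun x : ℝ => x - m0') ν')
          = Measure.map (fun x : ℝ => x + m0') (Measure.map (fun x : ℝ => x - m0) ν) := by
        rw [hcent0]
      rw [Measure.map_map (measurable_id'.add_const m0') (measurable_id'.sub_const m0'),
        Measure.map_map (measurable_id'.add_const m0') (measurable_id'.sub_const m0)] at h1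
      have e1 : ((fun x : ℝ => x + m0') ∘ fun x : ℝ => x - m0') = id := by
        funext x; simp
      have e2 : ((fun x : ℝ => x + m0') ∘ fun x : ℝ => x - m0)
          = fun x : ℝ => x + (m0' - m0) := by
        funext x; simp [Function.comp]; ring
      rw [e1, e2, Measure.map_id] at h1
      exact h1
    obtain ⟨l, r, hαmem, hallint⟩ := hmgf a c z
    have hint1 : Integrable (fun x => Real.exp (α s' * x)) ν :=
      hallint _ (hαmem s' hs').1
    have hint2 : Integrable (fun x => x * Real.exp (α s' * x)) ν :=
      aux_integrable_mul_exp (hαmem s' hs').1 hallint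
    have hms : condMean μ U (dyadEvent A C Z S a c z s') = ∫ x, x ∂(expTilt ν (α s')) := by
      rw [aux_condMean_eq_map_integral μ hU, htilt a c z s' hs']
    have hms' : condMean μ U (dyadEvent A C Z S a' c z' s')
        = ∫ x, x ∂(expTilt ν' (α s')) := by
      rw [aux_condMean_eq_map_integral μ hU, htilt a' c z' s' hs']
    have hfin := aux_integral_id_expTilt_shift (ν := ν) (m0' - m0) (α s') hint1 hint2
    rw [← hshift] at hfin
    rw [hms, hms', hfin]
    ring
  intro a c z s hs
  constructor
  · -- main identity
    have hEmeas := hW a c z s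
    have hwmeas : MeasurableSet (wEvent A C Z a c z) := by
      have : wEvent A C Z a c z = A ⁻¹' {a} ∩ (C ⁻¹' {c} ∩ Z ⁻¹' {z}) := by
        ext ω; simp [wEvent]
      rw [this]
      exact (hA (measurableSet_singleton a)).inter
        ((hC (measurableSet_singleton c)).inter (hZ (measurableSet_singleton z)))
    have hφ : Measurable (fun ω => (U ω, A ω, C ω, Z ω, S ω)) :=
      hU.prodMk (hA.prodMk (hC.prodMk (hZ.prodMk hS)))
    have hle := hφ.comap_le
    have hEG : MeasurableSet[MeasurableSpace.comap
        (fun ω => (U ω, A ω, C ω, Z ω, S ω)) inferInstance] (dyadEvent A C Z S a c z s) := by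
      refine ⟨Set.univ ×ˢ ({a} ×ˢ ({c} ×ˢ ({z} ×ˢ ({s} : Set (Fin 4))))), ?_, ?_⟩
      · exact MeasurableSet.univ.prod ((measurableSet_singleton a).prod
          ((measurableSet_singleton c).prod ((measurableSet_singleton z).prod
            (measurableSet_singleton s))))
      · ext ω; simp [dyadEvent, eq_comm]
    have h1 : ∫ ω in dyadEvent A C Z S a c z s, Y ω ∂μ
        = ∫ ω in dyadEvent A C Z S a c z s,
            Real.exp (U ω + b (S ω) (A ω) (C ω) + τ (S ω) (C ω)) ∂μ := by
      rw [← setIntegral_condExp hle hYint hEG]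
      exact setIntegral_congr_ae hEmeas (houtcome.mono fun ω h _ => h)
    have h2 : ∫ ω in dyadEvent A C Z S a c z s,
          Real.exp (U ω + b (S ω) (A ω) (C ω) + τ (S ω) (C ω)) ∂μ
        = Real.exp (b s a c + τ s c)
            * ∫ ω in dyadEvent A C Z S a c z s, Real.exp (U ω) ∂μ := by
      rw [← integral_const_mul]
      refine setIntegral_congr_fun hEmeas fun ω hω => ?_
      obtain ⟨ha, hc, hz, hsω⟩ := hω
      rw [ha, hc, hsω,
        show U ω + b s a c + τ s c = (b s a c + τ s c) + U ω from by ring, Real.exp_add]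
    have hYE : condMean μ Y (dyadEvent A C Z S a c z s)
        = Real.exp (b s a c + τ s c)
            * condMean μ (fun ω => Real.exp (U ω)) (dyadEvent A C Z S a c z s) := by
      unfold condMean
      rw [h1, h2]; ring
    have hexppos : 0 < condMean μ (fun ω => Real.exp (U ω)) (dyadEvent A C Z S a c z s) :=
      aux_condMean_exp_pos μ (hpos a c z s).ne' (hexpint a c z s)
    set ms := condMean μ U (dyadEvent A C Z S a c z s) with hmsdef
    have hΔ : condMean μ (fun ω => Real.exp (U ω - ms)) (dyadEvent A C Z S a c z s)
        = Real.exp (-ms)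
            * condMean μ (fun ω => Real.exp (U ω)) (dyadEvent A C Z S a c z s) := by
      unfold condMean
      have h : ∀ ω, Real.exp (U ω - ms) = Real.exp (-ms) * Real.exp (U ω) := by
        intro ω; rw [← Real.exp_add, neg_add_eq_sub]
      simp_rw [h]
      rw [integral_const_mul]; ring
    have hlog : Real.log (condMean μ (fun ω => Real.exp (U ω - ms))
          (dyadEvent A C Z S a c z s))
        = -ms + Real.log (condMean μ (fun ω => Real.exp (U ω))
            (dyadEvent A C Z S a c z s)) := by
      rw [hΔ, Real.log_mul (Real.exp_ne_zero _) hexppos.ne', Real.log_exp]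
    have hFunion : wEvent A C Z a c z
        = ⋃ t ∈ (Finset.univ : Finset (Fin 4)), dyadEvent A C Z S a c z t := by
      ext ω
      simp only [wEvent, dyadEvent, Set.mem_setOf_eq, Set.mem_iUnion, Finset.mem_univ,
        exists_true_left, exists_prop, true_and]
      constructor
      · rintro ⟨h1, h2, h3⟩; exact ⟨S ω, h1, h2, h3, rfl⟩
      · rintro ⟨t, h1, h2, h3, _⟩; exact ⟨h1, h2, h3⟩
    have hdisj : (↑(Finset.univ : Finset (Fin 4)) : Set (Fin 4)).PairwiseDisjoint
        (fun t => dyadEvent A C Z S a c z t) := by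
      intro t _ t' _ htt'
      refine Set.disjoint_left.mpr ?_
      rintro ω ⟨_, _, _, h1⟩ ⟨_, _, _, h2⟩
      exact htt' (h1.symm.trans h2 : t = t')
    have hμF : (μ (wEvent A C Z a c z)).toReal
        = ∑ t : Fin 4, (μ (dyadEvent A C Z S a c z t)).toReal := by
      rw [hFunion, measure_biUnion_finset hdisj (fun t _ => hW a c z t),
        ENNReal.toReal_sum (fun t _ => measure_ne_top μ _)]
    have hμFpos : 0 < (μ (wEvent A C Z a c z)).toReal := by
      rw [hμF]
      exact Finset.sum_pos
        (fun t _ => ENNReal.toReal_pos (hpos a c z t).ne' (measure_ne_top μ _))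
        Finset.univ_nonempty
    have hintU : ∫ ω in wEvent A C Z a c z, U ω ∂μ
        = ∑ t : Fin 4, ∫ ω in dyadEvent A C Z S a c z t, U ω ∂μ := by
      rw [hFunion]
      exact integral_biUnion_finset _ (fun t _ => hW a c z t) hdisj
        (fun t _ => hUint.integrableOn)
    have hterm : ∀ t : Fin 4, condMean μ U (dyadEvent A C Z S a c z t)
        * ((μ (dyadEvent A C Z S a c z t)).toReal / (μ (wEvent A C Z a c z)).toReal)
        = (∫ ω in dyadEvent A C Z S a c z t, U ω ∂μ) / (μ (wEvent A C Z a c z)).toReal := by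
      intro t
      have h0 : (μ (dyadEvent A C Z S a c z t)).toReal ≠ 0 :=
        (ENNReal.toReal_pos (hpos a c z t).ne' (measure_ne_top μ _)).ne'
      unfold condMean
      field_simp
    have hsum : (∑ t ∈ Finset.univ.filter (fun t => t ≠ s),
          (ms - condMean μ U (dyadEvent A C Z S a c z t))
            * ((μ (dyadEvent A C Z S a c z t)).toReal / (μ (wEvent A C Z a c z)).toReal))
        = ms - condMean μ U (wEvent A C Z a c z) := by
      rw [Finset.filter_ne', Finset.sum_erase _ (by simp [hmsdef])]
      have hp1 : ∑ t : Fin 4, (μ (dyadEvent A C Z S a c z t)).toReal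
          / (μ (wEvent A C Z a c z)).toReal = 1 := by
        rw [← Finset.sum_div, ← hμF, div_self hμFpos.ne']
      have expand : ∀ t : Fin 4, (ms - condMean μ U (dyadEvent A C Z S a c z t))
            * ((μ (dyadEvent A C Z S a c z t)).toReal / (μ (wEvent A C Z a c z)).toReal)
          = ms * ((μ (dyadEvent A C Z S a c z t)).toReal / (μ (wEvent A C Z a c z)).toReal)
            - (∫ ω in dyadEvent A C Z S a c z t, U ω ∂μ)
                / (μ (wEvent A C Z a c z)).toReal := by
        intro t
        rw [sub_mul, hterm t]
      simp_rw [expand]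
      rw [Finset.sum_sub_distrib, ← Finset.mul_sum, hp1, mul_one, ← Finset.sum_div,
        ← hintU]
      unfold condMean
      rw [div_eq_inv_mul]
    have hfin : Real.exp ((b s a c + τ s c)
          + Real.log (condMean μ (fun ω => Real.exp (U ω)) (dyadEvent A C Z S a c z s)))
        = Real.exp (b s a c + τ s c)
            * condMean μ (fun ω => Real.exp (U ω)) (dyadEvent A C Z S a c z s) := by
      rw [Real.exp_add, Real.exp_log hexppos]
    rw [hYE, hsum, hlog,
      show (ms - condMean μ U (wEvent A C Z a c z)) + b s a c
          + (τ s c + condMean μ U (wEvent A C Z a c z)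
              + (-ms + Real.log (condMean μ (fun ω => Real.exp (U ω))
                  (dyadEvent A C Z S a c z s))))
        = (b s a c + τ s c) + Real.log (condMean μ (fun ω => Real.exp (U ω))
            (dyadEvent A C Z S a c z s)) from by ring,
      hfin]
  · intro t a' z'
    by_cases ht : t = 0
    · subst ht
      exact key a z s hs a' z' c
    · have h1 := key a z s hs a' z' c
      have h2 := key a z t ht a' z' c
      linarith
end
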